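/- Classical $(\mathfrak{gl}_M,\mathfrak{gl}_N)$-duality with regular singularities: in the commutative polynomial algebra $\mathbb{C}[x^a_i, p^a_i]$ ($1\le a\le M$, $1\le i\le N$), for distinct $z_1,\dots,z_N \in \mathbb{C}$ and distinct $\lambda_1,\dots,\lambda_M \in \mathbb{C}$, the following identity of polynomials in two variables $z,\lambda$ holds: $\prod_{i=1}^N (z - z_i)\cdot\det\Big(\big(\lambda - \lambda_a\big)\delta_{ab} - \sum_{i=1}^N \frac{x^a_i p^b_i}{z - z_i}\Big)_{a,b=1}^M = \prod_{a=1}^M (\lambda - \lambda_a)\cdot\det\Big(\big(z - z_i\big)\delta_{ij} - \sum_{a=1}^M \frac{p^a_i x^a_j}{\lambda - \lambda_a}\Big)_{i,j=1}^N$. -/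

import Mathlib

set_option maxHeartbeats 4000000
set_option synthInstance.maxHeartbeats 400000


/-- The polynomial algebra `ℂ[x^a_i, p^a_i][z, λ]`: variables `(false, a, i) = x^a_i`,
`(true, a, i) = p^a_i`, `Sum.inr 0 = z`, `Sum.inr 1 = λ`. -/
abbrev R13 (M N : ℕ) : Type := MvPolynomial ((Bool × Fin M × Fin N) ⊕ Fin 2) ℂ

/-- Its field of fractions, in which the rational expressions below live. -/
abbrev K13 (M N : ℕ) : Type := FractionRing (R13 M N)

noncomputable def xv (M N : ℕ) (a : Fin M) (i : Fin N) : K13 M N :=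
  algebraMap (R13 M N) (K13 M N) (MvPolynomial.X (Sum.inl (false, a, i)))

noncomputable def pv (M N : ℕ) (a : Fin M) (i : Fin N) : K13 M N :=
  algebraMap (R13 M N) (K13 M N) (MvPolynomial.X (Sum.inl (true, a, i)))

noncomputable def zvar (M N : ℕ) : K13 M N :=
  algebraMap (R13 M N) (K13 M N) (MvPolynomial.X (Sum.inr 0))

noncomputable def lvar (M N : ℕ) : K13 M N :=
  algebraMap (R13 M N) (K13 M N) (MvPolynomial.X (Sum.inr 1))

/-- Embedding of complex constants. -/
noncomputable def cc (M N : ℕ) (w : ℂ) : K13 M N :=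
  algebraMap (R13 M N) (K13 M N) (MvPolynomial.C w)

lemma varsub_ne (M N : ℕ) (s : (Bool × Fin M × Fin N) ⊕ Fin 2) (w : ℂ) :
    algebraMap (R13 M N) (K13 M N) (MvPolynomial.X s) - cc M N w ≠ 0 := by
  rw [cc, ← map_sub]
  intro h
  have h2 : (MvPolynomial.X s - MvPolynomial.C w : R13 M N) = 0 := by
    apply IsFractionRing.injective (R13 M N) (K13 M N)
    rw [h, (algebraMap (R13 M N) (K13 M N)).map_zero]
  have := congrArg (MvPolynomial.coeff (Finsupp.single s 1)) h2
  rw [MvPolynomial.coeff_sub, MvPolynomial.coeff_X, if_pos rfl, MvPolynomial.coeff_C,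
    if_neg (fun h => one_ne_zero (Finsupp.single_eq_zero.mp h.symm)),
    MvPolynomial.coeff_zero] at this
  norm_num at this

/-- Classical `(𝔤𝔩_M, 𝔤𝔩_N)`-duality with regular singularities:
`∏_i (z - z_i) · det((λ - λ_a)δ_{ab} - ∑_i x^a_i p^b_i/(z - z_i))
 = ∏_a (λ - λ_a) · det((z - z_i)δ_{ij} - ∑_a p^a_i x^a_j/(λ - λ_a))`. -/
theorem stmt13 (M N : ℕ) (zi : Fin N → ℂ) (la : Fin M → ℂ)
    (hz : Function.Injective zi) (hl : Function.Injective la) :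
    (∏ i, (zvar M N - cc M N (zi i))) *
      (Matrix.of fun a b : Fin M =>
        (lvar M N - cc M N (la a)) * (if a = b then 1 else 0) -
          ∑ i, xv M N a i * pv M N b i / (zvar M N - cc M N (zi i))).det =
    (∏ a, (lvar M N - cc M N (la a))) *
      (Matrix.of fun i j : Fin N =>
        (zvar M N - cc M N (zi i)) * (if i = j then 1 else 0) -
          ∑ a, pv M N a i * xv M N a j / (lvar M N - cc M N (la a))).det := by
  set K := K13 M N
  set d1 : Fin M → K := fun a => lvar M N - cc M N (la a) with hd1
  set d2 : Fin N → K := fun i => zvar M N - cc M N (zi i) with hd2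
  have h1 : ∀ a, d1 a ≠ 0 := fun a => varsub_ne M N (Sum.inr 1) (la a)
  have h2 : ∀ i, d2 i ≠ 0 := fun i => varsub_ne M N (Sum.inr 0) (zi i)
  set Xm : Matrix (Fin M) (Fin N) K := Matrix.of fun a i => xv M N a i with hXm
  set Pm : Matrix (Fin N) (Fin M) K := Matrix.of fun i a => pv M N a i with hPm
  haveI i1 : Invertible (Matrix.diagonal d1) :=
    ⟨Matrix.diagonal fun a => (d1 a)⁻¹, by
      rw [Matrix.diagonal_mul_diagonal]
      have : (fun a => (d1 a)⁻¹ * d1 a) = fun _ => (1 : K) := by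
        funext a; exact inv_mul_cancel₀ (h1 a)
      rw [this]; exact Matrix.diagonal_one, by
      rw [Matrix.diagonal_mul_diagonal]
      have : (fun a => d1 a * (d1 a)⁻¹) = fun _ => (1 : K) := by
        funext a; exact mul_inv_cancel₀ (h1 a)
      rw [this]; exact Matrix.diagonal_one⟩
  haveI i2 : Invertible (Matrix.diagonal d2) :=
    ⟨Matrix.diagonal fun i => (d2 i)⁻¹, by
      rw [Matrix.diagonal_mul_diagonal]
      have : (fun i => (d2 i)⁻¹ * d2 i) = fun _ => (1 : K) := by
        funext i; exact inv_mul_cancel₀ (h2 i)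
      rw [this]; exact Matrix.diagonal_one, by
      rw [Matrix.diagonal_mul_diagonal]
      have : (fun i => d2 i * (d2 i)⁻¹) = fun _ => (1 : K) := by
        funext i; exact mul_inv_cancel₀ (h2 i)
      rw [this]; exact Matrix.diagonal_one⟩
  have hinv1 : ⅟(Matrix.diagonal d1) = Matrix.diagonal fun a => (d1 a)⁻¹ :=
    invOf_eq_right_inv (by
      rw [Matrix.diagonal_mul_diagonal]
      have : (fun a => d1 a * (d1 a)⁻¹) = fun _ => (1 : K) := by
        funext a; exact mul_inv_cancel₀ (h1 a)
      rw [this]; exact Matrix.diagonal_one)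
  have hinv2 : ⅟(Matrix.diagonal d2) = Matrix.diagonal fun i => (d2 i)⁻¹ :=
    invOf_eq_right_inv (by
      rw [Matrix.diagonal_mul_diagonal]
      have : (fun i => d2 i * (d2 i)⁻¹) = fun _ => (1 : K) := by
        funext i; exact mul_inv_cancel₀ (h2 i)
      rw [this]; exact Matrix.diagonal_one)
  have e1 := Matrix.det_fromBlocks₂₂ (Matrix.diagonal d1) Xm Pm (Matrix.diagonal d2)
  have e2 := Matrix.det_fromBlocks₁₁ (Matrix.diagonal d1) Xm Pm (Matrix.diagonal d2)
  rw [hinv1] at e2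
  rw [hinv2] at e1
  have hm1 : Matrix.diagonal d1 - Xm * Matrix.diagonal (fun i => (d2 i)⁻¹) * Pm =
      Matrix.of fun a b : Fin M =>
        (lvar M N - cc M N (la a)) * (if a = b then 1 else 0) -
          ∑ i, xv M N a i * pv M N b i / (zvar M N - cc M N (zi i)) := by
    ext a b
    simp only [Matrix.sub_apply, Matrix.diagonal_apply, Matrix.mul_apply,
      Matrix.mul_diagonal, Matrix.of_apply]
    congr 1
    · split <;> simp [hd1]
    · refine Finset.sum_congr rfl fun i _ => ?_
      rw [div_eq_mul_inv]
      simp only [mul_ite, mul_zero, Finset.sum_ite_eq', Finset.mem_univ, if_true]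
      show xv M N a i * (d2 i)⁻¹ * pv M N b i = _
      ring
  have hm2 : Matrix.diagonal d2 - Pm * Matrix.diagonal (fun a => (d1 a)⁻¹) * Xm =
      Matrix.of fun i j : Fin N =>
        (zvar M N - cc M N (zi i)) * (if i = j then 1 else 0) -
          ∑ a, pv M N a i * xv M N a j / (lvar M N - cc M N (la a)) := by
    ext i j
    simp only [Matrix.sub_apply, Matrix.diagonal_apply, Matrix.mul_apply,
      Matrix.mul_diagonal, Matrix.of_apply]
    congr 1
    · split <;> simp [hd2]
    · refine Finset.sum_congr rfl fun a _ => ?_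
      rw [div_eq_mul_inv]
      simp only [mul_ite, mul_zero, Finset.sum_ite_eq', Finset.mem_univ, if_true]
      show pv M N a i * (d1 a)⁻¹ * xv M N a j = _
      ring
  rw [hm1] at e1
  rw [hm2] at e2
  rw [Matrix.det_diagonal] at e1 e2
  calc (∏ i, d2 i) * _ = _ := e1.symm
    _ = _ := e2
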